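/- Let U be an open convex subset of ℝ^d and let L : ℝ^d → ℝ be three times continuously differentiable on U with the third derivative bounded in norm by M ≥ 0 on U. Let θ_a, θ_b ∈ U with θ_a ≠ θ_b, set β = ‖θ_b − θ_a‖, μ = (θ_b − θ_a)/β, let ∇L(θ_a), ∇L(θ_b) be the gradients and H_a, H_b the Hessian matrices of L at θ_a and θ_b. Then the barrier B(θ_a, θ_b) satisfies | B(θ_a, θ_b) − max_{λ∈[0,1]} λ(1−λ)[ β μ·(∇L(θ_a) − ∇L(θ_b)) + (1/2) β² μ^⊤((1−λ)H_a + λH_b)μ ] | ≤ (M/6) β³. -/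

import Mathlib

open scoped RealInnerProductSpace

open Set in
private lemma taylor3 {d : ℕ} {U : Set (EuclideanSpace ℝ (Fin d))}
    (hUopen : IsOpen U) (hUconv : Convex ℝ U)
    {L : EuclideanSpace ℝ (Fin d) → ℝ} {M : ℝ}
    (hL : ContDiffOn ℝ 3 L U)
    (hbd : ∀ x ∈ U, ‖iteratedFDerivWithin ℝ 3 L U x‖ ≤ M)
    (p q : EuclideanSpace ℝ (Fin d)) (hp : p ∈ U) (hq : q ∈ U) :
    ∀ t ∈ Set.Icc (0:ℝ) 1,
      |L (p + t • (q - p)) - L p - t * (fderiv ℝ L p (q - p))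
        - t ^ 2 / 2 * (iteratedFDeriv ℝ 2 L p (fun _ => q - p))|
      ≤ M * ‖q - p‖ ^ 3 * t ^ 3 / 2 := by
  set v : EuclideanSpace ℝ (Fin d) := q - p with hv
  set γ : ℝ → EuclideanSpace ℝ (Fin d) := fun t => p + t • v with hγ
  have hmem : ∀ t ∈ Icc (0:ℝ) 1, γ t ∈ U := by
    intro t ht
    have h : γ t = (1 - t) • p + t • q := by simp only [hγ, hv]; module
    rw [h]
    exact hUconv hp hq (by linarith [ht.2]) ht.1 (by ring)
  have hCAt : ∀ t ∈ Icc (0:ℝ) 1, ContDiffAt ℝ 3 L (γ t) := fun t ht =>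
    hL.contDiffAt (hUopen.mem_nhds (hmem t ht))
  have hγ' : ∀ t : ℝ, HasDerivAt γ v t := by
    intro t
    exact (by simpa using ((hasDerivAt_id t).smul_const v).const_add p :
      HasDerivAt (fun x : ℝ => p + x • v) v t)
  set g : ℕ → ℝ → ℝ := fun k t => iteratedFDeriv ℝ k L (γ t) (fun _ => v) with hgdef
  have hg : ∀ k : ℕ, k ≤ 2 → ∀ t ∈ Icc (0:ℝ) 1, HasDerivAt (g k) (g (k+1) t) t := by
    intro k hk t ht
    have hca : ContDiffAt ℝ 1 (iteratedFDeriv ℝ k L) (γ t) := by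
      apply (hCAt t ht).iteratedFDeriv_right
      have : ((1 : ℕ) : ℕ∞) + (k : ℕ∞) ≤ ((3 : ℕ) : ℕ∞) := by
        rw [← Nat.cast_add]
        exact_mod_cast by omega
      exact_mod_cast this
    have hF := (hca.differentiableAt one_ne_zero).hasFDerivAt
    set Φ := ContinuousMultilinearMap.apply ℝ (fun _ : Fin k => EuclideanSpace ℝ (Fin d)) ℝ
      (fun _ => v) with hΦdef
    have h2 := (Φ.hasFDerivAt.comp (γ t) hF).comp_hasDerivAt t (hγ' t)
    exact h2
  -- smoothness of g 0 on the interval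
  have hγc : ContDiff ℝ 3 γ := contDiff_const.add (contDiff_id.smul contDiff_const)
  have hg0eq : ∀ t : ℝ, g 0 t = L (γ t) := fun t => by
    simp [hgdef, iteratedFDeriv_zero_apply]
  have hψ : ContDiffOn ℝ 3 (g 0) (Icc 0 1) := by
    have : ContDiffOn ℝ 3 (fun t => L (γ t)) (Icc 0 1) :=
      hL.comp hγc.contDiffOn hmem
    exact this.congr fun t _ => hg0eq t
  have hud : UniqueDiffOn ℝ (Icc (0:ℝ) 1) := uniqueDiffOn_Icc zero_lt_one
  have hIt1 : ∀ t ∈ Icc (0:ℝ) 1, iteratedDerivWithin 1 (g 0) (Icc 0 1) t = g 1 t := by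
    intro t ht
    rw [iteratedDerivWithin_one]
    exact ((hg 0 (by norm_num) t ht).hasDerivWithinAt).derivWithin (hud t ht)
  have hIt2 : ∀ t ∈ Icc (0:ℝ) 1, iteratedDerivWithin 2 (g 0) (Icc 0 1) t = g 2 t := by
    intro t ht
    rw [show (2:ℕ) = 1 + 1 from rfl, iteratedDerivWithin_succ,
      derivWithin_congr hIt1 (hIt1 t ht)]
    exact ((hg 1 (by norm_num) t ht).hasDerivWithinAt).derivWithin (hud t ht)
  have hIt3 : ∀ t ∈ Icc (0:ℝ) 1, iteratedDerivWithin 3 (g 0) (Icc 0 1) t = g 3 t := by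
    intro t ht
    rw [show (3:ℕ) = 2 + 1 from rfl, iteratedDerivWithin_succ,
      derivWithin_congr hIt2 (hIt2 t ht)]
    exact ((hg 2 (by norm_num) t ht).hasDerivWithinAt).derivWithin (hud t ht)
  have hbound : ∀ y ∈ Icc (0:ℝ) 1,
      ‖iteratedDerivWithin 3 (g 0) (Icc 0 1) y‖ ≤ M * ‖v‖ ^ 3 := by
    intro y hy
    rw [hIt3 y hy]
    have h1 : ‖iteratedFDeriv ℝ 3 L (γ y) (fun _ => v)‖
        ≤ ‖iteratedFDeriv ℝ 3 L (γ y)‖ * ∏ _i : Fin 3, ‖v‖ :=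
      (iteratedFDeriv ℝ 3 L (γ y)).le_opNorm _
    have h2 : (∏ _i : Fin 3, ‖v‖) = ‖v‖ ^ 3 := by
      simp [Finset.prod_const]
    have h3 : ‖iteratedFDeriv ℝ 3 L (γ y)‖ ≤ M := by
      rw [← iteratedFDerivWithin_of_isOpen 3 hUopen (hmem y hy)]
      exact hbd (γ y) (hmem y hy)
    calc ‖g 3 y‖ ≤ ‖iteratedFDeriv ℝ 3 L (γ y)‖ * ‖v‖ ^ 3 := by rw [← h2]; exact h1
      _ ≤ M * ‖v‖ ^ 3 := by
          apply mul_le_mul_of_nonneg_right h3 (by positivity)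
  intro t ht
  have htay := taylor_mean_remainder_bound (f := g 0) (n := 2) zero_le_one hψ ht hbound
  have hexp : taylorWithinEval (g 0) 2 (Icc 0 1) 0 t
      = g 0 0 + t * g 1 0 + t ^ 2 / 2 * g 2 0 := by
    rw [taylor_within_apply]
    rw [Finset.sum_range_succ, Finset.sum_range_succ, Finset.sum_range_one]
    rw [iteratedDerivWithin_zero, hIt1 0 (by norm_num), hIt2 0 (by norm_num)]
    simp [Nat.factorial, smul_eq_mul]
    exact Or.inl (by ring)
  have hg00 : g 0 0 = L p := by rw [hg0eq]; simp [hγ]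
  have hg10 : g 1 0 = fderiv ℝ L p v := by
    have : γ 0 = p := by simp [hγ]
    simp [hgdef, this, iteratedFDeriv_one_apply]
  have hg20 : g 2 0 = iteratedFDeriv ℝ 2 L p (fun _ => v) := by
    have : γ 0 = p := by simp [hγ]
    simp only [hgdef]
    rw [this]
  rw [hexp, hg00, hg10, hg20] at htay
  have hval : g 0 t = L (p + t • v) := hg0eq t
  rw [hval] at htay
  rw [Real.norm_eq_abs] at htay
  have h2f : ((Nat.factorial 2 : ℕ) : ℝ) = 2 := by norm_num [Nat.factorial]
  calc |L (p + t • v) - L p - t * (fderiv ℝ L p v)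
        - t ^ 2 / 2 * (iteratedFDeriv ℝ 2 L p fun _ => v)|
      = |L (p + t • v) - (L p + t * (fderiv ℝ L p v)
        + t ^ 2 / 2 * (iteratedFDeriv ℝ 2 L p fun _ => v))| := by ring_nf
    _ ≤ M * ‖v‖ ^ 3 * (t - 0) ^ (2+1) / ((Nat.factorial 2 : ℕ) : ℝ) := htay
    _ = M * ‖v‖ ^ 3 * t ^ 3 / 2 := by rw [h2f]; ring

open scoped RealInnerProductSpace

private lemma fin2_const {E : Type*} (v : E) : (![v, v] : Fin 2 → E) = fun _ => v := by
  funext i; fin_cases i <;> rfl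


set_option maxHeartbeats 1000000 in
/-- Let `U ⊆ ℝ^d` be open and convex, `L` three times continuously
differentiable on `U` with `‖D³L‖ ≤ M` on `U`, and `θ_a ≠ θ_b ∈ U`. With
`β = ‖θ_b − θ_a‖`, `μ = (θ_b − θ_a)/β`, the barrier
`B(θ_a, θ_b) = max_{λ∈[0,1]} (L(λθ_a + (1−λ)θ_b) − λ L(θ_a) − (1−λ) L(θ_b))`
satisfies
`|B(θ_a,θ_b) − max_{λ∈[0,1]} λ(1−λ)[β μ·(∇L(θ_a) − ∇L(θ_b))
   + ½β² μᵀ((1−λ)H_a + λH_b)μ]| ≤ (M/6) β³`,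
where the Hessian quadratic forms `μᵀ H μ` are expressed via the second iterated
derivative applied to `(μ, μ)`. -/
theorem stmt0 {d : ℕ} (U : Set (EuclideanSpace ℝ (Fin d)))
    (hUopen : IsOpen U) (hUconv : Convex ℝ U)
    (L : EuclideanSpace ℝ (Fin d) → ℝ) (M : ℝ) (hM : 0 ≤ M)
    (hL : ContDiffOn ℝ 3 L U)
    (hbd : ∀ x ∈ U, ‖iteratedFDerivWithin ℝ 3 L U x‖ ≤ M)
    (θa θb : EuclideanSpace ℝ (Fin d)) (ha : θa ∈ U) (hb : θb ∈ U) (hab : θa ≠ θb)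
    (β : ℝ) (hβ : β = ‖θb - θa‖)
    (μ : EuclideanSpace ℝ (Fin d)) (hμ : μ = β⁻¹ • (θb - θa)) :
    |sSup ((fun lam : ℝ =>
          L (lam • θa + (1 - lam) • θb) - (lam * L θa + (1 - lam) * L θb)) '' Set.Icc 0 1)
      - sSup ((fun lam : ℝ => lam * (1 - lam) *
          (β * ⟪μ, gradient L θa - gradient L θb⟫
            + (1 / 2) * β ^ 2 *
              ((1 - lam) * (iteratedFDeriv ℝ 2 L θa ![μ, μ])
                + lam * (iteratedFDeriv ℝ 2 L θb ![μ, μ])))) '' Set.Icc 0 1)|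
      ≤ M / 6 * β ^ 3 := by
  have hβpos : 0 < β := by
    rw [hβ]
    exact norm_pos_iff.mpr (sub_ne_zero.mpr (Ne.symm hab))
  have hvab : θb - θa = β • μ := by rw [hμ, smul_inv_smul₀ hβpos.ne']
  have hvba : θa - θb = (-β) • μ := by
    rw [neg_smul, ← hvab, neg_sub]
  have hnab : ‖θb - θa‖ = β := hβ.symm
  have hnba : ‖θa - θb‖ = β := by rw [norm_sub_rev]; exact hβ.symm
  -- gradient identities
  have hgradeq : ∀ x : EuclideanSpace ℝ (Fin d), ∀ y : EuclideanSpace ℝ (Fin d),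
      fderiv ℝ L x y = ⟪y, gradient L x⟫ := by
    intro x y
    rw [real_inner_comm]
    exact (InnerProductSpace.toDual_symm_apply).symm
  have hDa : fderiv ℝ L θa (θb - θa) = β * ⟪μ, gradient L θa⟫ := by
    rw [hvab, map_smul, smul_eq_mul, hgradeq]
  have hDb : fderiv ℝ L θb (θa - θb) = (-β) * ⟪μ, gradient L θb⟫ := by
    rw [hvba, map_smul, smul_eq_mul, hgradeq]
  -- Hessian identities
  have hQ : ∀ (x : EuclideanSpace ℝ (Fin d)) (c : ℝ),
      iteratedFDeriv ℝ 2 L x (fun _ => c • μ) = c ^ 2 * iteratedFDeriv ℝ 2 L x ![μ, μ] := by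
    intro x c
    rw [fin2_const]
    have h : (fun _ : Fin 2 => c • μ)
        = fun i => (fun _ : Fin 2 => c) i • (fun _ : Fin 2 => μ) i := rfl
    rw [h, ContinuousMultilinearMap.map_smul_univ]
    simp [smul_eq_mul, sq]
  have hQa : iteratedFDeriv ℝ 2 L θa (fun _ => θb - θa)
      = β ^ 2 * iteratedFDeriv ℝ 2 L θa ![μ, μ] := by
    rw [show (fun _ : Fin 2 => θb - θa) = fun _ : Fin 2 => β • μ by rw [hvab], hQ]
  have hQb : iteratedFDeriv ℝ 2 L θb (fun _ => θa - θb)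
      = β ^ 2 * iteratedFDeriv ℝ 2 L θb ![μ, μ] := by
    rw [show (fun _ : Fin 2 => θa - θb) = fun _ : Fin 2 => (-β) • μ by rw [hvba], hQ]
    ring_nf
  have hTa := taylor3 hUopen hUconv hL hbd θa θb ha hb
  have hTb := taylor3 hUopen hUconv hL hbd θb θa hb ha
  set F : ℝ → ℝ := fun lam =>
      L (lam • θa + (1 - lam) • θb) - (lam * L θa + (1 - lam) * L θb) with hFdef
  set G : ℝ → ℝ := fun lam => lam * (1 - lam) *
      (β * ⟪μ, gradient L θa - gradient L θb⟫
        + (1 / 2) * β ^ 2 *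
          ((1 - lam) * (iteratedFDeriv ℝ 2 L θa ![μ, μ])
            + lam * (iteratedFDeriv ℝ 2 L θb ![μ, μ]))) with hGdef
  have key : ∀ lam ∈ Set.Icc (0:ℝ) 1, |F lam - G lam| ≤ M / 6 * β ^ 3 := by
    intro lam hlam
    obtain ⟨h0, h1⟩ := hlam
    have e1 := hTa (1 - lam) ⟨by linarith, by linarith⟩
    have e2 := hTb lam ⟨h0, h1⟩
    have hpt1 : θa + (1 - lam) • (θb - θa) = lam • θa + (1 - lam) • θb := by module
    have hpt2 : θb + lam • (θa - θb) = lam • θa + (1 - lam) • θb := by module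
    rw [hpt1, hDa, hQa, hnab] at e1
    rw [hpt2, hDb, hQb, hnba] at e2
    set X := L (lam • θa + (1 - lam) • θb) with hX
    set La := L θa
    set Lb := L θb
    set Ga := ⟪μ, gradient L θa⟫ with hGa
    set Gb := ⟪μ, gradient L θb⟫ with hGb
    set Ha := iteratedFDeriv ℝ 2 L θa ![μ, μ]
    set Hb := iteratedFDeriv ℝ 2 L θb ![μ, μ]
    have hinner : ⟪μ, gradient L θa - gradient L θb⟫ = Ga - Gb := inner_sub_right _ _ _
    set A1 := X - La - (1 - lam) * (β * Ga) - (1 - lam) ^ 2 / 2 * (β ^ 2 * Ha) with hA1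
    set A2 := X - Lb - lam * (-β * Gb) - lam ^ 2 / 2 * (β ^ 2 * Hb) with hA2
    have hsplit : F lam - G lam = lam * A1 + (1 - lam) * A2 := by
      rw [hFdef, hGdef]
      simp only [hinner, ← hX]
      rw [hA1, hA2]
      ring
    have hb1 : |A1| ≤ M * β ^ 3 * (1 - lam) ^ 3 / 2 := e1
    have hb2 : |A2| ≤ M * β ^ 3 * lam ^ 3 / 2 := e2
    have hKnn : 0 ≤ M * β ^ 3 := mul_nonneg hM (by positivity)
    have hl1m : (0:ℝ) ≤ 1 - lam := by linarith
    have hpoly : lam * (1 - lam) ^ 3 + (1 - lam) * lam ^ 3 ≤ 1 / 3 := by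
      have hq : lam * (1 - lam) ≤ 1 / 4 := by nlinarith [sq_nonneg (1 - 2 * lam)]
      have hs := sq_nonneg (lam * (1 - lam))
      calc lam * (1 - lam) ^ 3 + (1 - lam) * lam ^ 3
          = lam * (1 - lam) - 2 * (lam * (1 - lam)) ^ 2 := by ring
        _ ≤ lam * (1 - lam) := by linarith
        _ ≤ 1 / 3 := by linarith
    calc |F lam - G lam| = |lam * A1 + (1 - lam) * A2| := by rw [hsplit]
      _ ≤ |lam * A1| + |(1 - lam) * A2| := abs_add_le _ _
      _ = lam * |A1| + (1 - lam) * |A2| := by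
          rw [abs_mul, abs_mul, abs_of_nonneg h0, abs_of_nonneg hl1m]
      _ ≤ lam * (M * β ^ 3 * (1 - lam) ^ 3 / 2) + (1 - lam) * (M * β ^ 3 * lam ^ 3 / 2) :=
          add_le_add (mul_le_mul_of_nonneg_left hb1 h0)
            (mul_le_mul_of_nonneg_left hb2 hl1m)
      _ = M * β ^ 3 / 2 * (lam * (1 - lam) ^ 3 + (1 - lam) * lam ^ 3) := by ring
      _ ≤ M * β ^ 3 / 2 * (1 / 3) :=
          mul_le_mul_of_nonneg_left hpoly (by positivity)
      _ = M / 6 * β ^ 3 := by ring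
  -- sSup part
  have hGcont : Continuous G := by
    rw [hGdef]
    exact (continuous_id.mul (continuous_const.sub continuous_id)).mul
      (continuous_const.add (continuous_const.mul
        (((continuous_const.sub continuous_id).mul continuous_const).add
          (continuous_id.mul continuous_const))))
  have hFcont : ContinuousOn F (Set.Icc 0 1) := by
    rw [hFdef]
    apply ContinuousOn.sub
    · apply hL.continuousOn.comp (Continuous.continuousOn
        ((continuous_id.smul continuous_const).add
          ((continuous_const.sub continuous_id).smul continuous_const)))
      intro lam hlam
      exact hUconv ha hb hlam.1 (by simp only [Pi.sub_apply, id_eq]; linarith [hlam.2])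
        (by simp only [Pi.sub_apply, id_eq]; ring)
    · exact Continuous.continuousOn
        ((continuous_id.mul continuous_const).add
          ((continuous_const.sub continuous_id).mul continuous_const))
  have h01 : (0:ℝ) ∈ Set.Icc (0:ℝ) 1 := ⟨le_rfl, zero_le_one⟩
  have hneF : (F '' Set.Icc 0 1).Nonempty := ⟨F 0, Set.mem_image_of_mem F h01⟩
  have hneG : (G '' Set.Icc 0 1).Nonempty := ⟨G 0, Set.mem_image_of_mem G h01⟩
  have hbddF : BddAbove (F '' Set.Icc 0 1) :=
    (isCompact_Icc.image_of_continuousOn hFcont).bddAbove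
  have hbddG : BddAbove (G '' Set.Icc 0 1) :=
    (isCompact_Icc.image_of_continuousOn hGcont.continuousOn).bddAbove
  have hub1 : sSup (F '' Set.Icc 0 1) ≤ sSup (G '' Set.Icc 0 1) + M / 6 * β ^ 3 := by
    apply csSup_le hneF
    rintro a ⟨lam, hlam, rfl⟩
    have h := abs_le.mp (key lam hlam)
    have h2 := le_csSup hbddG (Set.mem_image_of_mem G hlam)
    linarith [h.2]
  have hub2 : sSup (G '' Set.Icc 0 1) ≤ sSup (F '' Set.Icc 0 1) + M / 6 * β ^ 3 := by
    apply csSup_le hneG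
    rintro a ⟨lam, hlam, rfl⟩
    have h2 := le_csSup hbddF (Set.mem_image_of_mem F hlam)
    have h3 : G lam ≤ F lam + M / 6 * β ^ 3 := by
      have h := abs_le.mp (key lam hlam)
      linarith [h.1]
    exact h3.trans (by linarith)
  exact abs_le.mpr ⟨by linarith, by linarith⟩
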